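/- Let a, b, c be real numbers with D = (3a+c)(a+3c) − b² ≠ 0, and set a₁ = a·((a+3c)² − 3b²)/D, b₁ = b·(3(a−c)² − b²)/D, c₁ = c·((3a+c)² − 3b²)/D. Then 4a₁c₁ − b₁² = 4ac − b²; that is, the discriminant of the quadratic is preserved by the rational Landen transformation. -/

import Mathlib

theorem landen_discriminant_invariance (a b c : ℝ)
    (D : ℝ) (hDdef : D = (3 * a + c) * (a + 3 * c) - b ^ 2) (hD : D ≠ 0)
    (a₁ b₁ c₁ : ℝ)
    (ha₁ : a₁ = a * ((a + 3 * c) ^ 2 - 3 * b ^ 2) / D)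
    (hb₁ : b₁ = b * (3 * (a - c) ^ 2 - b ^ 2) / D)
    (hc₁ : c₁ = c * ((3 * a + c) ^ 2 - 3 * b ^ 2) / D) :
    4 * a₁ * c₁ - b₁ ^ 2 = 4 * a * c - b ^ 2 := by
  subst ha₁ hb₁ hc₁ hDdef
  field_simp
  rw [div_eq_iff (pow_ne_zero 2 (by convert hD using 1; ring))]
  ring
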